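/- A mean-zero random walk on ℤ with i.i.d. increments having finite second moment and positive variance is recurrent: it returns to its starting point infinitely often almost surely. -/

import Mathlib

open MeasureTheory ProbabilityTheory Finset
open scoped ENNReal
namespace CF
variable {Ω : Type*} [MeasurableSpace Ω] (ξ : ℕ → Ω → ℤ) (μ : Measure Ω)

def S (n : ℕ) (ω : Ω) : ℤ := ∑ i ∈ Finset.Icc 1 n, ξ i ω
def blk (a k : ℕ) (ω : Ω) : Fin k → ℤ := fun i => ξ (a + 1 + i) ω
def pp {k : ℕ} (v : Fin k → ℤ) (j : ℕ) : ℤ :=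
  ∑ i ∈ Finset.univ.filter (fun i : Fin k => (i : ℕ) < j), v i
def ν (z : ℤ) : ℝ≥0∞ := μ (ξ 1 ⁻¹' {z})

lemma measAll {k : ℕ} (T : Set (Fin k → ℤ)) : MeasurableSet T :=
  T.to_countable.measurableSet

lemma meas_blk (hm : ∀ i, Measurable (ξ i)) (a k : ℕ) : Measurable (blk ξ a k) :=
  measurable_pi_lambda _ fun _ => hm _

lemma blk_singleton (hm : ∀ i, Measurable (ξ i))
    (hiid : iIndepFun ξ μ)
    (hident : ∀ i, IdentDistrib (ξ i) (ξ 1) μ μ)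
    (a k : ℕ) (v : Fin k → ℤ) :
    μ (blk ξ a k ⁻¹' {v}) = ∏ i, ν ξ μ (v i) := by
  classical
  set T : ℕ → Set ℤ := fun n => {z : ℤ | ∀ i : Fin k, a + 1 + (i : ℕ) = n → z = v i} with hT
  have hTi : ∀ i : Fin k, T (a + 1 + (i:ℕ)) = {v i} := by
    intro i; ext z
    simp only [hT, Set.mem_setOf_eq, Set.mem_singleton_iff]
    constructor
    · intro h; exact h i rfl
    · rintro rfl i' hi'
      have : (i' : ℕ) = i := by omega
      rw [show i' = i from Fin.ext this]
  have hset : blk ξ a k ⁻¹' {v}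
      = ⋂ n ∈ Finset.image (fun i : Fin k => a + 1 + (i:ℕ)) Finset.univ, ξ n ⁻¹' (T n) := by
    ext ω
    simp only [Set.mem_preimage, Set.mem_singleton_iff, Set.mem_iInter, Finset.mem_image,
      Finset.mem_univ, true_and]
    constructor
    · rintro h n ⟨i, rfl⟩
      rw [hTi i]
      exact congrFun h i
    · intro h; funext i
      have := h (a + 1 + (i:ℕ)) ⟨i, rfl⟩
      rwa [hTi i] at this
  rw [hset, hiid.meas_biInter (fun n _ => MeasurableSpace.measurableSet_comap.mpr
      ⟨T n, (T n).to_countable.measurableSet, rfl⟩)]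
  rw [Finset.prod_image (fun i _ j _ h => Fin.ext (by omega))]
  refine Finset.prod_congr rfl fun i _ => ?_
  rw [hTi i]
  exact (hident (a + 1 + (i:ℕ))).measure_mem_eq (measurableSet_singleton _)

lemma blk_law (hm : ∀ i, Measurable (ξ i))
    (hiid : iIndepFun ξ μ)
    (hident : ∀ i, IdentDistrib (ξ i) (ξ 1) μ μ)
    (a k : ℕ) (T : Set (Fin k → ℤ)) :
    μ (blk ξ a k ⁻¹' T) = ∑' v : T, ∏ i, ν ξ μ ((v : Fin k → ℤ) i) := by
  have hu : blk ξ a k ⁻¹' T = ⋃ v : T, blk ξ a k ⁻¹' {(v : Fin k → ℤ)} := by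
    ext ω
    simp only [Set.mem_preimage, Set.mem_iUnion, Set.mem_singleton_iff]
    exact ⟨fun h => ⟨⟨_, h⟩, rfl⟩, by rintro ⟨v, hv⟩; rw [hv]; exact v.2⟩
  rw [hu, measure_iUnion ?_ fun v => (meas_blk ξ hm a k) (measurableSet_singleton _)]
  · exact tsum_congr fun v => blk_singleton ξ μ hm hiid hident a k v
  · intro v w hvw
    refine Set.disjoint_left.mpr fun ω h1 h2 => hvw ?_
    simp only [Set.mem_preimage, Set.mem_singleton_iff] at h1 h2
    exact Subtype.coe_injective (h1.symm.trans h2)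

lemma blk_shift (hm : ∀ i, Measurable (ξ i))
    (hiid : iIndepFun ξ μ)
    (hident : ∀ i, IdentDistrib (ξ i) (ξ 1) μ μ)
    (a k : ℕ) (T : Set (Fin k → ℤ)) :
    μ (blk ξ a k ⁻¹' T) = μ (blk ξ 0 k ⁻¹' T) := by
  rw [blk_law ξ μ hm hiid hident a k T, blk_law ξ μ hm hiid hident 0 k T]

lemma blk_indep (hm : ∀ i, Measurable (ξ i))
    (hiid : iIndepFun ξ μ)
    (m k : ℕ) (E : Set (Fin m → ℤ)) (F : Set (Fin k → ℤ)) :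
    μ (blk ξ 0 m ⁻¹' E ∩ blk ξ m k ⁻¹' F)
      = μ (blk ξ 0 m ⁻¹' E) * μ (blk ξ m k ⁻¹' F) := by
  have hd : Disjoint (Finset.Icc 1 m) (Finset.Icc (m+1) (m+k)) := by
    rw [Finset.disjoint_left]
    intro n hn hn'
    simp only [Finset.mem_Icc] at hn hn'
    omega
  have hind := hiid.indepFun_finset (Finset.Icc 1 m) (Finset.Icc (m+1) (m+k)) hd hm
  set g1 : ((Finset.Icc 1 m : Finset ℕ) → ℤ) → (Fin m → ℤ) :=
    fun t i => t ⟨0 + 1 + (i:ℕ), by simp only [Finset.mem_Icc]; omega⟩ with hg1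
  set g2 : ((Finset.Icc (m+1) (m+k) : Finset ℕ) → ℤ) → (Fin k → ℤ) :=
    fun t i => t ⟨m + 1 + (i:ℕ), by simp only [Finset.mem_Icc]; omega⟩ with hg2
  have hmg1 : Measurable g1 := measurable_pi_lambda _ fun i => measurable_pi_apply _
  have hmg2 : Measurable g2 := measurable_pi_lambda _ fun i => measurable_pi_apply _
  have hind2 : IndepFun (blk ξ 0 m) (blk ξ m k) μ := by
    have := hind.comp hmg1 hmg2
    convert this using 2 <;> rfl
  exact hind2.measure_inter_preimage_eq_mul E F (measAll E) (measAll F)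

lemma pp_blk (a k j : ℕ) (hj : j ≤ k) (ω : Ω) :
    pp (blk ξ a k ω) j = ∑ i ∈ Finset.Icc (a+1) (a+j), ξ i ω := by
  unfold pp blk
  refine Finset.sum_bij' (i := fun i _ => a + 1 + (i : ℕ))
    (j := fun n hn => ⟨n - (a+1), by simp only [Finset.mem_Icc] at hn; omega⟩)
    ?_ ?_ ?_ ?_ ?_
  · intro i hi; simp only [Finset.mem_filter, Finset.mem_univ, true_and] at hi
    simp only [Finset.mem_Icc]; omega
  · intro n hn; simp only [Finset.mem_Icc] at hn
    simp only [Finset.mem_filter, Finset.mem_univ, true_and]; omega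
  · intro i hi; simp only [Finset.mem_filter, Finset.mem_univ, true_and] at hi
    ext; simp
  · intro n hn; simp only [Finset.mem_Icc] at hn; simp; omega
  · intro i _; rfl

lemma pp_S (k j : ℕ) (hj : j ≤ k) (ω : Ω) : pp (blk ξ 0 k ω) j = S ξ j ω := by
  rw [pp_blk ξ 0 k j hj ω]; simp [S]

lemma S_split (m n : ℕ) (h : m ≤ n) (ω : Ω) :
    S ξ n ω = S ξ m ω + ∑ i ∈ Finset.Icc (m+1) n, ξ i ω := by
  unfold S
  rw [show Finset.Icc 1 n = Finset.Ioc 0 n from Finset.Icc_add_one_left_eq_Ioc 0 n,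
      show Finset.Icc 1 m = Finset.Ioc 0 m from Finset.Icc_add_one_left_eq_Ioc 0 m,
      show Finset.Icc (m+1) n = Finset.Ioc m n from Finset.Icc_add_one_left_eq_Ioc m n,
      ← Finset.sum_Ioc_consecutive _ (Nat.zero_le m) h]

lemma swap_sum (N : ℕ) (f : ℕ → ℕ → ℝ≥0∞) :
    ∑ n ∈ Finset.range (N+1), ∑ m ∈ Finset.range (n+1), f m (n-m)
      = ∑ m ∈ Finset.range (N+1), ∑ j ∈ Finset.range (N+1-m), f m j := by
  have h1 := Finset.sum_sigma' (Finset.range (N+1)) (fun n => Finset.range (n+1))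
    (fun n m => f m (n-m))
  have h2 := Finset.sum_sigma' (Finset.range (N+1)) (fun m => Finset.range (N+1-m))
    (fun m j => f m j)
  rw [h1, h2]
  refine Finset.sum_bij' (i := fun x _ => (⟨x.2, x.1 - x.2⟩ : Σ _ : ℕ, ℕ))
    (j := fun y _ => (⟨y.1 + y.2, y.1⟩ : Σ _ : ℕ, ℕ)) ?_ ?_ ?_ ?_ ?_
  · rintro ⟨n, m⟩ h
    simp only [Finset.mem_sigma, Finset.mem_range] at h ⊢; omega
  · rintro ⟨m, j⟩ h
    simp only [Finset.mem_sigma, Finset.mem_range] at h ⊢; omega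
  · rintro ⟨n, m⟩ h
    simp only [Finset.mem_sigma, Finset.mem_range] at h
    simp only [Sigma.mk.inj_iff, heq_eq_eq]
    exact ⟨by omega, trivial⟩
  · rintro ⟨m, j⟩ h
    simp only [Finset.mem_sigma, Finset.mem_range] at h
    simp only [Sigma.mk.inj_iff, heq_eq_eq]
    exact ⟨trivial, by omega⟩
  · rintro ⟨n, m⟩ h; rfl


noncomputable def P (n : ℕ) (x : ℤ) : ℝ≥0∞ := μ {ω | S ξ n ω = x}
noncomputable def Q (N : ℕ) : ℝ≥0∞ := ∑ n ∈ Finset.range (N+1), P ξ μ n 0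

lemma setS_eq (n : ℕ) (x : ℤ) :
    {ω | S ξ n ω = x} = blk ξ 0 n ⁻¹' {v | pp v n = x} := by
  ext ω; simp only [Set.mem_setOf_eq, Set.mem_preimage]
  rw [pp_S ξ n n le_rfl]

def Hit (m : ℕ) (x : ℤ) : Set Ω := {ω | (∀ j < m, S ξ j ω ≠ x) ∧ S ξ m ω = x}

lemma Hit_eq (m : ℕ) (x : ℤ) :
    Hit ξ m x = blk ξ 0 m ⁻¹' {u | (∀ j < m, pp u j ≠ x) ∧ pp u m = x} := by
  ext ω
  simp only [Hit, Set.mem_setOf_eq, Set.mem_preimage]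
  constructor
  · rintro ⟨h1, h2⟩
    exact ⟨fun j hj => by rw [pp_S ξ m j hj.le]; exact h1 j hj,
      by rw [pp_S ξ m m le_rfl]; exact h2⟩
  · rintro ⟨h1, h2⟩
    refine ⟨fun j hj => ?_, ?_⟩
    · have := h1 j hj; rwa [pp_S ξ m j hj.le] at this
    · have := h2; rwa [pp_S ξ m m le_rfl] at this

lemma Hit_meas (hm : ∀ i, Measurable (ξ i)) (m : ℕ) (x : ℤ) :
    MeasurableSet (Hit ξ m x) := by
  rw [Hit_eq]; exact (meas_blk ξ hm 0 m) (measAll _)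

lemma meas_S (hm : ∀ i, Measurable (ξ i)) (n : ℕ) : Measurable (S ξ n) :=
  Finset.measurable_sum _ fun i _ => hm i

lemma Hit_disjoint (x : ℤ) (g : ℕ → Set Ω)
    (hg : ∀ m, g m ⊆ Hit ξ m x) : Pairwise (Function.onFun Disjoint g) := by
  intro a b hab
  rcases Nat.lt_or_ge a b with hlt | hge
  · refine Set.disjoint_left.mpr fun ω h1 h2 => ?_
    exact (hg b h2).1 a hlt (hg a h1).2
  · refine Set.disjoint_left.mpr fun ω h1 h2 => ?_
    exact (hg a h1).1 b (by omega) (hg b h2).2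

lemma bridge_meas (hm : ∀ i, Measurable (ξ i)) (m n : ℕ) :
    MeasurableSet {ω | ∑ i ∈ Finset.Icc (m+1) n, ξ i ω = 0} :=
  (Finset.measurable_sum _ fun i _ => hm i) (measurableSet_singleton (0:ℤ))

lemma measure_S_eq (hm : ∀ i, Measurable (ξ i))
    (hiid : iIndepFun ξ μ)
    (hident : ∀ i, IdentDistrib (ξ i) (ξ 1) μ μ) (n : ℕ) (x : ℤ) :
    P ξ μ n x = ∑ m ∈ Finset.range (n+1), μ (Hit ξ m x) * P ξ μ (n-m) 0 := by
  have hdec : {ω | S ξ n ω = x}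
      = ⋃ m ∈ Finset.range (n+1),
          (Hit ξ m x ∩ {ω | ∑ i ∈ Finset.Icc (m+1) n, ξ i ω = 0}) := by
    ext ω
    simp only [Set.mem_setOf_eq, Set.mem_iUnion, Finset.mem_range, Hit, Set.mem_inter_iff]
    constructor
    · intro hx
      have hex : ∃ j, S ξ j ω = x := ⟨n, hx⟩
      have hmn : Nat.find hex ≤ n := Nat.find_min' hex hx
      refine ⟨Nat.find hex, by omega, ⟨⟨fun j hj => Nat.find_min hex hj, Nat.find_spec hex⟩, ?_⟩⟩
      have hs := S_split ξ (Nat.find hex) n hmn ω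
      rw [hx, Nat.find_spec hex] at hs
      omega
    · rintro ⟨m, hm1, ⟨⟨h1, h2⟩, h3⟩⟩
      have hs := S_split ξ m n (by omega) ω
      rw [h2, h3] at hs; omega
  rw [P, hdec, measure_biUnion_finset ?_ ?_]
  · refine Finset.sum_congr rfl fun m hmem => ?_
    simp only [Finset.mem_range] at hmem
    have hb : {ω | ∑ i ∈ Finset.Icc (m+1) n, ξ i ω = 0}
        = blk ξ m (n-m) ⁻¹' {v | pp v (n-m) = 0} := by
      ext ω; simp only [Set.mem_setOf_eq, Set.mem_preimage]
      rw [pp_blk ξ m (n-m) (n-m) le_rfl, show m + (n-m) = n by omega]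
    rw [Hit_eq, hb, blk_indep ξ μ hm hiid m (n-m) _ _,
      blk_shift ξ μ hm hiid hident m (n-m), ← Hit_eq]
    congr 1
    rw [P, setS_eq]
  · exact (Hit_disjoint ξ x _ (fun m => Set.inter_subset_left)).set_pairwise _
  · exact fun m _ => (Hit_meas ξ hm m x).inter (bridge_meas ξ hm m n)

lemma hit_sum [IsProbabilityMeasure μ] (hm : ∀ i, Measurable (ξ i))
    (hiid : iIndepFun ξ μ)
    (hident : ∀ i, IdentDistrib (ξ i) (ξ 1) μ μ) (N : ℕ) (x : ℤ) :
    ∑ n ∈ Finset.range (N+1), P ξ μ n x ≤ Q ξ μ N := by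
  calc ∑ n ∈ Finset.range (N+1), P ξ μ n x
      = ∑ n ∈ Finset.range (N+1), ∑ m ∈ Finset.range (n+1),
          μ (Hit ξ m x) * P ξ μ (n-m) 0 := by
        exact Finset.sum_congr rfl fun n _ => measure_S_eq ξ μ hm hiid hident n x
    _ = ∑ m ∈ Finset.range (N+1), ∑ j ∈ Finset.range (N+1-m),
          μ (Hit ξ m x) * P ξ μ j 0 := swap_sum N (fun m j => μ (Hit ξ m x) * P ξ μ j 0)
    _ = ∑ m ∈ Finset.range (N+1), μ (Hit ξ m x) * ∑ j ∈ Finset.range (N+1-m), P ξ μ j 0 := by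
        simp [Finset.mul_sum]
    _ ≤ ∑ m ∈ Finset.range (N+1), μ (Hit ξ m x) * Q ξ μ N := by
        refine Finset.sum_le_sum fun m _ => mul_le_mul_right ?_ _
        exact Finset.sum_le_sum_of_subset (Finset.range_subset_range.mpr (by omega))
    _ = (∑ m ∈ Finset.range (N+1), μ (Hit ξ m x)) * Q ξ μ N := (Finset.sum_mul _ _ _).symm
    _ ≤ 1 * Q ξ μ N := by
        refine mul_le_mul_left ?_ _
        have hd := (Hit_disjoint ξ x (fun m => Hit ξ m x) (fun m => subset_rfl)).set_pairwise
          (↑(Finset.range (N+1)) : Set ℕ)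
        rw [← measure_biUnion_finset hd (fun m _ => Hit_meas ξ hm m x)]
        exact prob_le_one
    _ = Q ξ μ N := one_mul _
lemma mcast : Measurable (fun z : ℤ => (z : ℝ)) := measurable_from_top

section Var
variable [IsProbabilityMeasure μ] (hm : ∀ i, Measurable (ξ i))
    (hiid : iIndepFun ξ μ)
    (hident : ∀ i, IdentDistrib (ξ i) (ξ 1) μ μ)
    (hint : Integrable (fun ω => (ξ 1 ω : ℝ)) μ)
    (hmean : ∫ ω, (ξ 1 ω : ℝ) ∂μ = 0)
    (hL2 : Integrable (fun ω => ((ξ 1 ω : ℝ)) ^ 2) μ)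

lemma identR (hident : ∀ i, IdentDistrib (ξ i) (ξ 1) μ μ) (i : ℕ) :
    IdentDistrib (fun ω => (ξ i ω : ℝ)) (fun ω => (ξ 1 ω : ℝ)) μ μ :=
  (hident i).comp mcast

include hm hL2 in
lemma memL2_one : MemLp (fun ω => (ξ 1 ω : ℝ)) 2 μ := by
  have hms : Measurable (fun ω => (ξ 1 ω : ℝ)) := mcast.comp (hm 1)
  rw [memLp_two_iff_integrable_sq hms.aestronglyMeasurable]
  exact hL2

include hm hident hL2 in
lemma memL2_i (i : ℕ) : MemLp (fun ω => (ξ i ω : ℝ)) 2 μ :=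
  (identR ξ μ hident i).symm.memLp_snd (memL2_one ξ μ hm hL2)

include hm hident hint hmean in
lemma mean_i (i : ℕ) : ∫ ω, (ξ i ω : ℝ) ∂μ = 0 := by
  rw [(identR ξ μ hident i).integral_eq]; exact hmean

include hm hident hmean hL2 in
lemma var_i (i : ℕ) :
    variance (fun ω => (ξ i ω : ℝ)) μ = ∫ ω, ((ξ 1 ω : ℝ)) ^ 2 ∂μ := by
  rw [(identR ξ μ hident i).variance_eq, variance_eq_sub (memL2_one ξ μ hm hL2)]
  simp only [Pi.pow_apply]
  rw [hmean]
  ring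

include hm hident hint hmean hL2 in
lemma mean_S (n : ℕ) : ∫ ω, ((S ξ n ω : ℤ) : ℝ) ∂μ = 0 := by
  have : (fun ω => ((S ξ n ω : ℤ) : ℝ)) = fun ω => ∑ i ∈ Finset.Icc 1 n, (ξ i ω : ℝ) := by
    funext ω; unfold S; push_cast; ring
  rw [this, integral_finset_sum _ fun i _ =>
    ((memL2_i ξ μ hm hident hL2 i).integrable one_le_two)]
  exact Finset.sum_eq_zero fun i _ => mean_i ξ μ hm hident hint hmean i

include hm hiid hident hmean hL2 in
lemma var_S (n : ℕ) :
    variance (fun ω => ((S ξ n ω : ℤ) : ℝ)) μ = n * ∫ ω, ((ξ 1 ω : ℝ)) ^ 2 ∂μ := by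
  have he : (fun ω => ((S ξ n ω : ℤ) : ℝ)) = ∑ i ∈ Finset.Icc 1 n, (fun ω => (ξ i ω : ℝ)) := by
    funext ω; unfold S; push_cast; simp
  rw [he, IndepFun.variance_sum (fun i _ => memL2_i ξ μ hm hident hL2 i)
    (fun i hi j hj hij => by
      have : IndepFun (fun ω => (ξ i ω : ℝ)) (fun ω => (ξ j ω : ℝ)) μ :=
        (hiid.indepFun hij).comp mcast mcast
      exact this)]
  rw [Finset.sum_congr rfl fun i _ => var_i ξ μ hm hident hmean hL2 i]
  simp [Nat.card_Icc]

include hm hiid hident hint hmean hL2 in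
lemma cheb (n : ℕ) (c : ℝ) (hc : 0 < c) :
    μ {ω | c ≤ |((S ξ n ω : ℤ) : ℝ)|}
      ≤ ENNReal.ofReal ((n * ∫ ω, ((ξ 1 ω : ℝ)) ^ 2 ∂μ) / c ^ 2) := by
  have hX : MemLp (fun ω => ((S ξ n ω : ℤ) : ℝ)) 2 μ := by
    have he : (fun ω => ((S ξ n ω : ℤ) : ℝ)) = ∑ i ∈ Finset.Icc 1 n, (fun ω => (ξ i ω : ℝ)) := by
      funext ω; unfold S; push_cast; simp
    rw [he]
    exact memLp_finset_sum' _ fun i _ => memL2_i ξ μ hm hident hL2 i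
  have h := meas_ge_le_variance_div_sq (μ := μ) hX hc
  rw [mean_S ξ μ hm hident hint hmean hL2 n, var_S ξ μ hm hiid hident hmean hL2 n] at h
  simpa using h

end Var

noncomputable def Vr : ℝ := ∫ ω, ((ξ 1 ω : ℝ)) ^ 2 ∂μ
noncomputable def KK (N : ℕ) : ℕ := ⌈Real.sqrt (2 * Vr ξ μ * N)⌉₊ + 1

section Var2
variable [IsProbabilityMeasure μ] (hm : ∀ i, Measurable (ξ i))
    (hiid : iIndepFun ξ μ)
    (hident : ∀ i, IdentDistrib (ξ i) (ξ 1) μ μ)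
    (hint : Integrable (fun ω => (ξ 1 ω : ℝ)) μ)
    (hmean : ∫ ω, (ξ 1 ω : ℝ) ∂μ = 0)
    (hL2 : Integrable (fun ω => ((ξ 1 ω : ℝ)) ^ 2) μ)

include hm hiid hident hint hmean hL2 in
lemma half_le (N n : ℕ) (hn : n ≤ N) :
    (2 : ℝ≥0∞)⁻¹ ≤ ∑ x ∈ Finset.Icc (-(KK ξ μ N : ℤ)) ((KK ξ μ N : ℤ)), P ξ μ n x := by
  have hV0 : 0 ≤ Vr ξ μ := integral_nonneg fun ω => sq_nonneg _
  set V := Vr ξ μ with hVdef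
  set K := KK ξ μ N with hKdef
  have hK1 : 1 ≤ K := Nat.le_add_left 1 _
  have hKpos : (0:ℝ) < K := by exact_mod_cast hK1
  have hKsq : 2 * V * N ≤ (K : ℝ)^2 := by
    have h1 : Real.sqrt (2*V*N) ≤ (K:ℝ) := by
      rw [hKdef, KK]
      push_cast
      have := Nat.le_ceil (Real.sqrt (2*V*N))
      have h2 : (2 : ℝ) * Vr ξ μ * ↑N = 2*V*N := by rw [hVdef]
      rw [h2] at this
      linarith
    calc 2*V*N = (Real.sqrt (2*V*N))^2 := (Real.sq_sqrt (by positivity)).symm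
      _ ≤ (K:ℝ)^2 := by nlinarith [Real.sqrt_nonneg (2*V*N)]
  have hch := cheb ξ μ hm hiid hident hint hmean hL2 n (K:ℝ) hKpos
  have hhalf : μ {ω | (K:ℝ) ≤ |((S ξ n ω : ℤ) : ℝ)|} ≤ 2⁻¹ := by
    refine hch.trans ?_
    rw [show ((2:ℝ≥0∞))⁻¹ = ENNReal.ofReal (2⁻¹) by
      rw [ENNReal.ofReal_inv_of_pos (by norm_num)]; norm_num]
    apply ENNReal.ofReal_le_ofReal
    rw [div_le_iff₀ (by positivity)]
    have hnN : (n:ℝ) ≤ N := by exact_mod_cast hn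
    have hVint : (∫ ω, ((ξ 1 ω : ℝ))^2 ∂μ) = V := rfl
    rw [hVint]
    nlinarith [mul_le_mul_of_nonneg_right hnN hV0]
  have hms : Measurable (fun ω => ((S ξ n ω : ℤ) : ℝ)) := mcast.comp (meas_S ξ hm n)
  have hAmeas : MeasurableSet {ω | (K:ℝ) ≤ |((S ξ n ω : ℤ) : ℝ)|} :=
    measurableSet_le measurable_const hms.abs
  have hsub : {ω | (K:ℝ) ≤ |((S ξ n ω : ℤ) : ℝ)|}ᶜ
      ⊆ {ω | S ξ n ω ∈ Finset.Icc (-(K:ℤ)) (K:ℤ)} := by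
    intro ω hω
    simp only [Set.mem_compl_iff, Set.mem_setOf_eq, not_le] at hω
    simp only [Set.mem_setOf_eq, Finset.mem_Icc]
    rw [abs_lt] at hω
    constructor <;> [exact_mod_cast hω.1.le; exact_mod_cast hω.2.le]
  have hdecomp : μ {ω | S ξ n ω ∈ Finset.Icc (-(K:ℤ)) (K:ℤ)}
      = ∑ x ∈ Finset.Icc (-(K:ℤ)) (K:ℤ), P ξ μ n x := by
    have hu : {ω | S ξ n ω ∈ Finset.Icc (-(K:ℤ)) (K:ℤ)}
        = ⋃ x ∈ Finset.Icc (-(K:ℤ)) (K:ℤ), {ω | S ξ n ω = x} := by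
      ext ω; simp [Set.mem_iUnion]
    rw [hu, measure_biUnion_finset ?_ ?_]
    · rfl
    · intro a _ b _ hab
      refine Set.disjoint_left.mpr fun ω h1 h2 => hab ?_
      simp only [Set.mem_setOf_eq] at h1 h2
      rw [← h1, ← h2]
    · exact fun x _ => (meas_S ξ hm n) (measurableSet_singleton x)
  rw [← hdecomp]
  calc (2:ℝ≥0∞)⁻¹ = 1 - 2⁻¹ := by
        rw [ENNReal.one_sub_inv_two]
    _ ≤ 1 - μ {ω | (K:ℝ) ≤ |((S ξ n ω : ℤ) : ℝ)|} := tsub_le_tsub le_rfl hhalf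
    _ = μ ({ω | (K:ℝ) ≤ |((S ξ n ω : ℤ) : ℝ)|}ᶜ) := by
        rw [measure_compl hAmeas (measure_ne_top μ _), measure_univ]
    _ ≤ _ := measure_mono hsub

include hm hiid hident hint hmean hL2 in
lemma Q_lower (N : ℕ) :
    ((N:ℝ≥0∞)+1) ≤ (2 * (2 * KK ξ μ N + 1) : ℕ) * Q ξ μ N := by
  set K := KK ξ μ N with hKdef
  have h1 : ((N:ℝ≥0∞)+1) * 2⁻¹ ≤ ((2*K+1 : ℕ) : ℝ≥0∞) * Q ξ μ N := by
    calc ((N:ℝ≥0∞)+1) * 2⁻¹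
        = ∑ _n ∈ Finset.range (N+1), (2:ℝ≥0∞)⁻¹ := by
          rw [Finset.sum_const, Finset.card_range, nsmul_eq_mul]; push_cast; ring
      _ ≤ ∑ n ∈ Finset.range (N+1), ∑ x ∈ Finset.Icc (-(K:ℤ)) (K:ℤ), P ξ μ n x :=
          Finset.sum_le_sum fun n hn => half_le ξ μ hm hiid hident hint hmean hL2 N n
            (by simp only [Finset.mem_range] at hn; omega)
      _ = ∑ x ∈ Finset.Icc (-(K:ℤ)) (K:ℤ), ∑ n ∈ Finset.range (N+1), P ξ μ n x :=
          Finset.sum_comm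
      _ ≤ ∑ _x ∈ Finset.Icc (-(K:ℤ)) (K:ℤ), Q ξ μ N :=
          Finset.sum_le_sum fun x _ => hit_sum ξ μ hm hiid hident N x
      _ = ((2*K+1 : ℕ) : ℝ≥0∞) * Q ξ μ N := by
          rw [Finset.sum_const, nsmul_eq_mul]
          congr 2
          rw [Int.card_Icc]
          omega
  calc ((N:ℝ≥0∞)+1) = 2 * (((N:ℝ≥0∞)+1) * 2⁻¹) := by
        rw [mul_comm ((N:ℝ≥0∞)+1) 2⁻¹, ← mul_assoc,
          ENNReal.mul_inv_cancel (by norm_num) (by norm_num), one_mul]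
    _ ≤ 2 * (((2*K+1 : ℕ) : ℝ≥0∞) * Q ξ μ N) := mul_le_mul_right h1 2
    _ = (2 * (2 * K + 1) : ℕ) * Q ξ μ N := by push_cast; ring

include hm hiid hident hint hmean hL2 in
lemma Q_unbounded (hvar : 0 < ∫ ω, ((ξ 1 ω : ℝ)) ^ 2 ∂μ) (C : ℝ≥0∞) (hC : C ≠ ⊤) :
    ∃ N, C ≤ Q ξ μ N := by
  have hV0 : (0:ℝ) < Vr ξ μ := hvar
  set V := Vr ξ μ with hVdef
  set A := C.toReal with hAdef
  have hA0 : 0 ≤ A := ENNReal.toReal_nonneg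
  set B : ℝ := 4 * Real.sqrt (2*V) + 10 with hBdef
  have hB0 : (0:ℝ) < B := by positivity
  set N : ℕ := max 1 ⌈(A*B)^2⌉₊ with hNdef
  have hN1 : 1 ≤ N := le_max_left _ _
  have hNge : (A*B)^2 ≤ (N:ℝ) := le_trans (Nat.le_ceil _) (by exact_mod_cast le_max_right _ _)
  have hsqrtN : A * B ≤ Real.sqrt N := by
    rw [show A*B = Real.sqrt ((A*B)^2) from (Real.sqrt_sq (by positivity)).symm]
    exact Real.sqrt_le_sqrt hNge
  have hcN : ((2 * (2 * KK ξ μ N + 1) : ℕ) : ℝ) ≤ B * Real.sqrt N := by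
    have hceil : ((⌈Real.sqrt (2*V*N)⌉₊ : ℝ)) < Real.sqrt (2*V*N) + 1 :=
      Nat.ceil_lt_add_one (Real.sqrt_nonneg _)
    have hsm : Real.sqrt (2*V*N) = Real.sqrt (2*V) * Real.sqrt N := by
      rw [← Real.sqrt_mul (by positivity)]
    have h1N : (1:ℝ) ≤ Real.sqrt N := by
      rw [show (1:ℝ) = Real.sqrt 1 from (Real.sqrt_one).symm]
      exact Real.sqrt_le_sqrt (by exact_mod_cast hN1)
    have hKle : ((KK ξ μ N : ℕ) : ℝ) ≤ Real.sqrt (2*V) * Real.sqrt N + 2 := by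
      rw [KK]
      push_cast
      rw [← hVdef, ← hsm]
      linarith
    push_cast
    nlinarith [Real.sqrt_nonneg (2*V), Real.sqrt_nonneg (N:ℝ)]
  refine ⟨N, ?_⟩
  have hmain := Q_lower ξ μ hm hiid hident hint hmean hL2 N
  set c : ℕ := 2 * (2 * KK ξ μ N + 1) with hcdef
  have hc0 : (c : ℝ≥0∞) ≠ 0 := by positivity
  have hct : (c : ℝ≥0∞) ≠ ⊤ := ENNReal.natCast_ne_top c
  rw [← ENNReal.mul_le_mul_iff_left hc0 hct]
  have hCc : C * c ≤ ((N:ℝ≥0∞)+1) := by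
    have hreal : A * c ≤ (N:ℝ) + 1 := by
      have h2 : A * (c:ℝ) ≤ A * (B * Real.sqrt N) :=
        mul_le_mul_of_nonneg_left hcN hA0
      have h3 : A * (B * Real.sqrt N) = (A*B) * Real.sqrt N := by ring
      have h4 : (A*B) * Real.sqrt N ≤ Real.sqrt N * Real.sqrt N :=
        mul_le_mul_of_nonneg_right hsqrtN (Real.sqrt_nonneg _)
      have h5 : Real.sqrt (N:ℝ) * Real.sqrt N = N := Real.mul_self_sqrt (by positivity)
      linarith
    calc C * c = ENNReal.ofReal A * ENNReal.ofReal (c:ℝ) := by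
          rw [hAdef, ENNReal.ofReal_toReal hC, ENNReal.ofReal_natCast]
      _ = ENNReal.ofReal (A * c) := (ENNReal.ofReal_mul hA0).symm
      _ ≤ ENNReal.ofReal ((N:ℝ)+1) := ENNReal.ofReal_le_ofReal hreal
      _ = ((N:ℝ≥0∞)+1) := by
          rw [ENNReal.ofReal_add (by positivity) zero_le_one]
          rw [ENNReal.ofReal_natCast, ENNReal.ofReal_one]
  calc C * c ≤ ((N:ℝ≥0∞)+1) := hCc
    _ ≤ (c : ℝ≥0∞) * Q ξ μ N := hmain
    _ = Q ξ μ N * c := mul_comm _ _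
end Var2

lemma S_zero (ω : Ω) : S ξ 0 ω = 0 := by simp [S]

noncomputable def q (k : ℕ) : ℝ≥0∞ := μ {ω | ∀ n, 1 ≤ n → n ≤ k → S ξ n ω ≠ 0}

lemma q_set_eq (k : ℕ) : {ω | ∀ n, 1 ≤ n → n ≤ k → S ξ n ω ≠ 0}
    = blk ξ 0 k ⁻¹' {v | ∀ j, 1 ≤ j → j ≤ k → pp v j ≠ 0} := by
  ext ω
  simp only [Set.mem_setOf_eq, Set.mem_preimage]
  constructor
  · intro h j hj1 hj2
    rw [pp_S ξ k j hj2]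
    exact h j hj1 hj2
  · intro h n hn1 hn2
    have := h n hn1 hn2
    rwa [pp_S ξ k n hn2] at this

lemma q_anti (k l : ℕ) (h : k ≤ l) : q ξ μ l ≤ q ξ μ k := by
  apply measure_mono
  intro ω hω n hn1 hn2
  exact hω n hn1 (by omega)

lemma lastvisit [IsProbabilityMeasure μ] (hm : ∀ i, Measurable (ξ i))
    (hiid : iIndepFun ξ μ)
    (hident : ∀ i, IdentDistrib (ξ i) (ξ 1) μ μ) (N : ℕ) :
    q ξ μ N * Q ξ μ N ≤ 1 := by
  classical
  set Last : ℕ → Set Ω := fun m =>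
    {ω | S ξ m ω = 0} ∩ ⋂ n ∈ Finset.Icc (m+1) N, {ω | S ξ n ω ≠ 0} with hLast
  have hmeasne : ∀ n : ℕ, MeasurableSet {ω | S ξ n ω ≠ 0} := by
    intro n
    have : {ω | S ξ n ω ≠ 0} = {ω | S ξ n ω = 0}ᶜ := rfl
    rw [this]
    exact ((meas_S ξ hm n) (measurableSet_singleton 0)).compl
  have hmeas : ∀ m, MeasurableSet (Last m) := fun m =>
    ((meas_S ξ hm m) (measurableSet_singleton 0)).inter
      (MeasurableSet.biInter (Finset.Icc (m+1) N).countable_toSet fun n _ => hmeasne n)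
  have hcover : (Set.univ : Set Ω) = ⋃ m ∈ Finset.range (N+1), Last m := by
    ext ω
    simp only [Set.mem_univ, true_iff, Set.mem_iUnion, Finset.mem_range]
    have h0 : S ξ 0 ω = 0 := S_zero ξ ω
    have hm_le : Nat.findGreatest (fun j => S ξ j ω = 0) N ≤ N := Nat.findGreatest_le N
    have hm_spec : S ξ (Nat.findGreatest (fun j => S ξ j ω = 0) N) ω = 0 :=
      Nat.findGreatest_spec (P := fun j => S ξ j ω = 0) (Nat.zero_le N) h0
    refine ⟨Nat.findGreatest (fun j => S ξ j ω = 0) N, by omega, hm_spec, ?_⟩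
    simp only [Set.mem_iInter, Finset.mem_Icc, Set.mem_setOf_eq]
    rintro n ⟨hn1, hn2⟩
    exact Nat.findGreatest_is_greatest (P := fun j => S ξ j ω = 0) (by omega) hn2
  have hdisj : (↑(Finset.range (N+1)) : Set ℕ).PairwiseDisjoint Last := by
    intro a ha b hb hab
    simp only [Finset.coe_range, Set.mem_Iio] at ha hb
    have key : ∀ x y : ℕ, x < y → y < N+1 → Disjoint (Last x) (Last y) := by
      intro x y hxy hyN
      refine Set.disjoint_left.mpr fun ω h1 h2 => ?_
      obtain ⟨-, h1b⟩ := h1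
      obtain ⟨h2a, -⟩ := h2
      simp only [Set.mem_iInter, Finset.mem_Icc, Set.mem_setOf_eq] at h1b
      exact h1b y ⟨by omega, by omega⟩ h2a
    rcases Nat.lt_or_ge a b with hlt | hge
    · exact key a b hlt hb
    · exact (key b a (by omega) ha).symm
  have hfact : ∀ m, m ≤ N → μ (Last m) = P ξ μ m 0 * q ξ μ (N-m) := by
    intro m hmN
    have he : Last m = (blk ξ 0 m ⁻¹' {u | pp u m = 0}) ∩
        (blk ξ m (N-m) ⁻¹' {v | ∀ j, 1 ≤ j → j ≤ N-m → pp v j ≠ 0}) := by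
      ext ω
      simp only [hLast, Set.mem_inter_iff, Set.mem_setOf_eq, Set.mem_preimage,
        Set.mem_iInter, Finset.mem_Icc]
      constructor
      · rintro ⟨h0, hall⟩
        refine ⟨by rw [pp_S ξ m m le_rfl]; exact h0, fun j hj1 hj2 => ?_⟩
        rw [pp_blk ξ m (N-m) j (by omega) ω]
        have hs := S_split ξ m (m+j) (by omega) ω
        have hne := hall (m+j) ⟨by omega, by omega⟩
        omega
      · rintro ⟨h0, hall⟩
        rw [pp_S ξ m m le_rfl] at h0
        refine ⟨h0, ?_⟩
        rintro n ⟨hn1, hn2⟩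
        have hs := S_split ξ m n (by omega) ω
        have hb := hall (n - m) (by omega) (by omega)
        rw [pp_blk ξ m (N-m) (n-m) (by omega) ω, show m + (n-m) = n by omega] at hb
        omega
    rw [he, blk_indep ξ μ hm hiid, blk_shift ξ μ hm hiid hident m (N-m)]
    congr 1
    · rw [P, setS_eq]
    · rw [q, q_set_eq]
  calc q ξ μ N * Q ξ μ N
      = ∑ m ∈ Finset.range (N+1), P ξ μ m 0 * q ξ μ N := by
        rw [Q, Finset.mul_sum]
        exact Finset.sum_congr rfl fun m _ => mul_comm _ _
    _ ≤ ∑ m ∈ Finset.range (N+1), P ξ μ m 0 * q ξ μ (N-m) :=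
        Finset.sum_le_sum fun m _ => mul_le_mul_right (q_anti ξ μ (N-m) N (by omega)) _
    _ = ∑ m ∈ Finset.range (N+1), μ (Last m) := by
        refine Finset.sum_congr rfl fun m hmem => ?_
        simp only [Finset.mem_range] at hmem
        exact (hfact m (by omega)).symm
    _ = μ (⋃ m ∈ Finset.range (N+1), Last m) :=
        (measure_biUnion_finset hdisj fun m _ => hmeas m).symm
    _ = 1 := by rw [← hcover, measure_univ]

lemma noret [IsProbabilityMeasure μ] (hm : ∀ i, Measurable (ξ i))
    (hiid : iIndepFun ξ μ)
    (hident : ∀ i, IdentDistrib (ξ i) (ξ 1) μ μ)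
    (hint : Integrable (fun ω => (ξ 1 ω : ℝ)) μ)
    (hmean : ∫ ω, (ξ 1 ω : ℝ) ∂μ = 0)
    (hL2 : Integrable (fun ω => ((ξ 1 ω : ℝ)) ^ 2) μ)
    (hvar : 0 < ∫ ω, ((ξ 1 ω : ℝ)) ^ 2 ∂μ) (m : ℕ) :
    μ {ω | ∀ n, m < n → ∑ i ∈ Finset.Icc (m+1) n, ξ i ω ≠ 0} = 0 := by
  set A := {ω | ∀ n, m < n → ∑ i ∈ Finset.Icc (m+1) n, ξ i ω ≠ 0} with hA
  have hle : ∀ k, μ A ≤ q ξ μ k := by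
    intro k
    have hsub : A ⊆ blk ξ m k ⁻¹' {v | ∀ j, 1 ≤ j → j ≤ k → pp v j ≠ 0} := by
      intro ω hω
      simp only [Set.mem_preimage, Set.mem_setOf_eq]
      intro j hj1 hj2
      rw [pp_blk ξ m k j hj2 ω]
      exact hω (m+j) (by omega)
    calc μ A ≤ μ (blk ξ m k ⁻¹' {v | ∀ j, 1 ≤ j → j ≤ k → pp v j ≠ 0}) :=
          measure_mono hsub
      _ = μ (blk ξ 0 k ⁻¹' {v | ∀ j, 1 ≤ j → j ≤ k → pp v j ≠ 0}) :=
          blk_shift ξ μ hm hiid hident m k _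
      _ = q ξ μ k := by rw [q, q_set_eq]
  by_contra hne
  obtain ⟨k, hk⟩ := Q_unbounded ξ μ hm hiid hident hint hmean hL2 hvar (2 / μ A)
    (ENNReal.div_lt_top (by norm_num) hne).ne
  have hcontr : (2:ℝ≥0∞) ≤ 1 := by
    calc (2:ℝ≥0∞) = 2 / μ A * μ A :=
          (ENNReal.div_mul_cancel hne (measure_ne_top μ A)).symm
      _ ≤ Q ξ μ k * q ξ μ k := mul_le_mul' hk (hle k)
      _ = q ξ μ k * Q ξ μ k := mul_comm _ _
      _ ≤ 1 := lastvisit ξ μ hm hiid hident k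
  norm_num at hcontr
end CF

open MeasureTheory ProbabilityTheory in
/-- Chung–Fuchs: a mean-zero random walk on `ℤ` with i.i.d. increments having finite
second moment and positive variance returns to its starting point infinitely often
almost surely. -/
theorem mean_zero_walk_recurrent (Ω : Type*) [MeasurableSpace Ω] (μ : Measure Ω)
    [IsProbabilityMeasure μ] (ξ : ℕ → Ω → ℤ) (hm : ∀ i, Measurable (ξ i))
    (hiid : iIndepFun ξ μ)
    (hident : ∀ i, IdentDistrib (ξ i) (ξ 1) μ μ)
    (hint : Integrable (fun ω => (ξ 1 ω : ℝ)) μ)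
    (hmean : ∫ ω, (ξ 1 ω : ℝ) ∂μ = 0)
    (hL2 : Integrable (fun ω => ((ξ 1 ω : ℝ)) ^ 2) μ)
    (hvar : 0 < ∫ ω, ((ξ 1 ω : ℝ)) ^ 2 ∂μ) :
    ∀ᵐ ω ∂μ, {n : ℕ | 1 ≤ n ∧ ∑ i ∈ Finset.Icc 1 n, ξ i ω = 0}.Infinite := by
  classical
  have key : ∀ m : ℕ, μ {ω | ∀ n, m < n → ∑ i ∈ Finset.Icc (m+1) n, ξ i ω ≠ 0} = 0 :=
    fun m => CF.noret ξ μ hm hiid hident hint hmean hL2 hvar m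
  have hnull : μ (⋃ m : ℕ, {ω | ∀ n, m < n → ∑ i ∈ Finset.Icc (m+1) n, ξ i ω ≠ 0}) = 0 :=
    measure_iUnion_null key
  rw [ae_iff]
  refine measure_mono_null ?_ hnull
  intro ω hω
  simp only [Set.mem_setOf_eq] at hω
  have hfin : {n : ℕ | 1 ≤ n ∧ CF.S ξ n ω = 0}.Finite := Set.not_infinite.mp hω
  obtain ⟨b, hb⟩ := hfin.bddAbove
  set m := Nat.findGreatest (fun j => CF.S ξ j ω = 0) b with hmdef
  have hspec : CF.S ξ m ω = 0 :=
    Nat.findGreatest_spec (P := fun j => CF.S ξ j ω = 0) (Nat.zero_le b) (CF.S_zero ξ ω)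
  have hgt : ∀ n, m < n → CF.S ξ n ω ≠ 0 := by
    intro n hn hSn
    rcases Nat.lt_or_ge b n with h | h
    · have hmem : n ∈ {n : ℕ | 1 ≤ n ∧ CF.S ξ n ω = 0} := ⟨by omega, hSn⟩
      have := hb hmem
      omega
    · exact Nat.findGreatest_is_greatest (P := fun j => CF.S ξ j ω = 0) hn h hSn
  refine Set.mem_iUnion.mpr ⟨m, ?_⟩
  simp only [Set.mem_setOf_eq]
  intro n hn
  have hs := CF.S_split ξ m n (by omega) ω
  have hne := hgt n hn
  unfold CF.S at hs hne hspec
  omega
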